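/- Let d be an integer with 5 ≤ d ≤ 9, set γ = (1/2)(6d - 12 - (d+2)√(2d-4)) and δ = √(d-2)/(2√2), and let g₁(y) = y²/(γ + δ y²). Then g₁ extends smoothly to [0,∞) with g₁(0) = 0, g₁'(0) = 0, and g₁''(0) = 2/γ > 0; moreover g₁(y) → b := 1/δ as y → ∞ and lim_{y→∞} y³ g₁'(y) = 2γ/δ² = -2(d-2) b (b-1)(b-2). Thus g₁ satisfies the boundary conditions characterizing a Yang–Mills shrinker. -/

import Mathlib

open Real Set Filter Topology

set_option maxHeartbeats 1200000

/-- For `5 ≤ d ≤ 9`, the explicit function `g₁(y) = y²/(γ + δ y²)` with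
`γ = (1/2)(6d - 12 - (d+2)√(2d-4))`, `δ = √(d-2)/(2√2)` extends smoothly to `[0,∞)` with
`g₁(0) = 0`, `g₁'(0) = 0`, `g₁''(0) = 2/γ > 0`, `g₁(y) → b := 1/δ` as `y → ∞`, and
`y³ g₁'(y) → 2γ/δ² = -2(d-2) b(b-1)(b-2)`: the boundary conditions of a shrinker. -/
theorem explicit_shrinker_boundary_conditions (d : ℕ) (hd5 : 5 ≤ d) (hd9 : d ≤ 9)
    (γ δ : ℝ)
    (hγ : γ = 1 / 2 * (6 * (d : ℝ) - 12 - ((d : ℝ) + 2) * Real.sqrt (2 * (d : ℝ) - 4)))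
    (hδ : δ = Real.sqrt ((d : ℝ) - 2) / (2 * Real.sqrt 2))
    (g₁ : ℝ → ℝ) (hg₁ : g₁ = fun y => y ^ 2 / (γ + δ * y ^ 2)) :
    ContDiffOn ℝ (⊤ : ℕ∞) g₁ (Ici 0) ∧
    g₁ 0 = 0 ∧
    deriv g₁ 0 = 0 ∧
    deriv (deriv g₁) 0 = 2 / γ ∧
    0 < 2 / γ ∧
    Tendsto g₁ atTop (𝓝 (1 / δ)) ∧
    Tendsto (fun y => y ^ 3 * deriv g₁ y) atTop (𝓝 (2 * γ / δ ^ 2)) ∧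
    2 * γ / δ ^ 2 =
      -2 * ((d : ℝ) - 2) * (1 / δ) * (1 / δ - 1) * (1 / δ - 2) := by
  have hD5 : (5:ℝ) ≤ (d:ℝ) := by exact_mod_cast hd5
  have hD9 : (d:ℝ) ≤ 9 := by exact_mod_cast hd9
  -- sqrt facts
  have hr0 : (0:ℝ) < Real.sqrt 2 := Real.sqrt_pos.2 (by norm_num)
  set r := Real.sqrt 2 with hr
  have hr2 : r ^ 2 = 2 := Real.sq_sqrt (by norm_num)
  have hs0 : 0 < Real.sqrt ((d:ℝ) - 2) := Real.sqrt_pos.2 (by linarith)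
  set s := Real.sqrt ((d:ℝ) - 2) with hs
  have hs2 : s ^ 2 = (d:ℝ) - 2 := Real.sq_sqrt (by linarith)
  have hsplit : Real.sqrt (2 * (d:ℝ) - 4) = r * s := by
    rw [hr, hs, ← Real.sqrt_mul (by norm_num : (0:ℝ) ≤ 2)]
    ring_nf
  -- positivity of γ and δ
  have hγpos : 0 < γ := by
    have h2 : (r * s) ^ 2 = 2 * (d:ℝ) - 4 := by
      rw [mul_pow, hr2, hs2]; ring
    have key : ((d:ℝ) + 2) * (r * s) < 6 * (d:ℝ) - 12 := by
      nlinarith [sq_nonneg (r * s - 4), mul_nonneg (by linarith : (0:ℝ) ≤ (d:ℝ)+2)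
        (mul_nonneg hr0.le hs0.le)]
    rw [hγ, hsplit]; linarith
  have hδpos : 0 < δ := by
    rw [hδ]; positivity
  have hden : ∀ y : ℝ, 0 < γ + δ * y ^ 2 := fun y => by positivity
  -- derivative formula
  have hHas : ∀ y : ℝ, HasDerivAt g₁ (2 * γ * y / (γ + δ * y ^ 2) ^ 2) y := by
    intro y
    have h1 : HasDerivAt (fun y : ℝ => y ^ 2) (2 * y) y := by
      simpa using hasDerivAt_pow 2 y
    have h2 : HasDerivAt (fun y : ℝ => γ + δ * y ^ 2) (δ * (2 * y)) y := by
      exact (h1.const_mul δ).const_add γ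
    have := h1.fun_div h2 (hden y).ne'
    rw [hg₁]
    exact this.congr_deriv (by ring)
  have hderiv : deriv g₁ = fun y => 2 * γ * y / (γ + δ * y ^ 2) ^ 2 :=
    funext fun y => (hHas y).deriv
  refine ⟨?_, ?_, ?_, ?_, ?_, ?_, ?_, ?_⟩
  · -- smoothness
    rw [hg₁]
    exact ((contDiff_id.pow 2).div
      (contDiff_const.add (contDiff_const.mul (contDiff_id.pow 2)))
      (fun y => (hden y).ne')).contDiffOn
  · rw [hg₁]; simp
  · rw [hderiv]; simp
  · -- second derivative at 0
    rw [hderiv]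
    have h1 : HasDerivAt (fun y : ℝ => 2 * γ * y) (2 * γ) 0 := by
      simpa using (hasDerivAt_id (0:ℝ)).const_mul (2 * γ)
    have h2 : HasDerivAt (fun y : ℝ => (γ + δ * y ^ 2) ^ 2)
        (2 * (γ + δ * (0:ℝ) ^ 2) ^ 1 * (δ * (2 * 0))) 0 := by
      have hb : HasDerivAt (fun y : ℝ => γ + δ * y ^ 2) (δ * (2 * 0)) 0 := by
        simpa using (((hasDerivAt_pow 2 (0:ℝ)).const_mul δ).const_add γ)
      simpa using hb.fun_pow 2
    have := h1.fun_div h2 (by positivity : ((γ + δ * (0:ℝ) ^ 2) ^ 2) ≠ 0)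
    have h3 := this.deriv
    rw [h3]
    field_simp
    ring
  · positivity
  · -- limit of g₁
    have hlim : Tendsto (fun y : ℝ => γ * (y ^ 2)⁻¹ + δ) atTop (𝓝 (γ * 0 + δ)) := by
      exact (((tendsto_pow_atTop (two_ne_zero)).inv_tendsto_atTop).const_mul γ).add_const δ
    have hlim2 : Tendsto (fun y : ℝ => 1 / (γ * (y ^ 2)⁻¹ + δ)) atTop (𝓝 (1 / δ)) := by
      have : γ * 0 + δ = δ := by ring
      rw [this] at hlim
      exact hlim.inv₀ hδpos.ne' |>.const_mul 1 |>.congr (by simp [one_div])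
    refine hlim2.congr' ?_
    filter_upwards [eventually_ge_atTop (1:ℝ)] with y hy
    have hy0 : y ≠ 0 := by linarith
    rw [hg₁]
    rw [eq_comm, div_eq_div_iff (by positivity) (by positivity)]
    field_simp
  · -- limit of y³ g₁'
    have hlim : Tendsto (fun y : ℝ => γ * (y ^ 2)⁻¹ + δ) atTop (𝓝 (γ * 0 + δ)) := by
      exact (((tendsto_pow_atTop (two_ne_zero)).inv_tendsto_atTop).const_mul γ).add_const δ
    have hlim2 : Tendsto (fun y : ℝ => 2 * γ / (γ * (y ^ 2)⁻¹ + δ) ^ 2) atTop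
        (𝓝 (2 * γ / δ ^ 2)) := by
      have h0 : γ * 0 + δ = δ := by ring
      rw [h0] at hlim
      exact (tendsto_const_nhds.div (hlim.pow 2) (by positivity))
    refine hlim2.congr' ?_
    filter_upwards [eventually_ge_atTop (1:ℝ)] with y hy
    have hy0 : y ≠ 0 := by linarith
    rw [hderiv]
    have := (hden y).ne'
    field_simp
  · -- algebraic identity
    rw [hγ, hδ, hsplit]
    have hrne : r ≠ 0 := hr0.ne'
    have hsne : s ≠ 0 := hs0.ne'
    rw [show ((d:ℝ)) = s ^ 2 + 2 from by linarith]
    field_simp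
    linear_combination (-s^4) * hr2
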